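/- Two-step construction of a Fortin operator: let V be a Banach space, V_h ⊂ V a subspace, b : V × M → ℝ bilinear, M_h ⊂ M. Suppose Π₁, Π₂ : V → V_h are linear with ‖Π₁v‖ ≤ c₁‖v‖, ‖Π₂(I - Π₁)v‖ ≤ c₂‖v‖, and b(v - Π₂v, q_h) = 0 for all v ∈ V, q_h ∈ M_h. Then Π_h v := Π₁v + Π₂(v - Π₁v) satisfies b(v - Π_h v, q_h) = 0 for all v ∈ V, q_h ∈ M_h, and ‖Π_h v‖ ≤ (c₁ + c₂)‖v‖. -/
import Mathlib

/-- two-step construction of a Fortin operator: let `V` be a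
normed space, `V_h ⊆ V` a subspace, `b : V × M → ℝ` bilinear, `M_h ⊆ M`.
Suppose `Π₁, Π₂ : V → V_h` are linear with `‖Π₁ v‖ ≤ c₁ ‖v‖`,
`‖Π₂ (I - Π₁) v‖ ≤ c₂ ‖v‖`, and `b(v - Π₂ v, q_h) = 0` for all `v`, `q_h`.
Then `Π_h v := Π₁ v + Π₂ (v - Π₁ v)` maps into `V_h`, satisfies
`b(v - Π_h v, q_h) = 0`, and `‖Π_h v‖ ≤ (c₁ + c₂) ‖v‖`. -/
theorem two_step_fortin {V M : Type*} [NormedAddCommGroup V] [NormedSpace ℝ V]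
    [AddCommGroup M] [Module ℝ M]
    (b : V →ₗ[ℝ] M →ₗ[ℝ] ℝ)
    (Vh : Submodule ℝ V) (Mh : Submodule ℝ M)
    (P1 P2 : V →ₗ[ℝ] V)
    (hP1Vh : ∀ v : V, P1 v ∈ Vh) (hP2Vh : ∀ v : V, P2 v ∈ Vh)
    (c1 c2 : ℝ)
    (hc1 : ∀ v : V, ‖P1 v‖ ≤ c1 * ‖v‖)
    (hc2 : ∀ v : V, ‖P2 (v - P1 v)‖ ≤ c2 * ‖v‖)
    (hb : ∀ v : V, ∀ qh ∈ Mh, b (v - P2 v) qh = 0) :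
    ∀ v : V, (P1 v + P2 (v - P1 v)) ∈ Vh ∧
      (∀ qh ∈ Mh, b (v - (P1 v + P2 (v - P1 v))) qh = 0) ∧
      ‖P1 v + P2 (v - P1 v)‖ ≤ (c1 + c2) * ‖v‖ := by
  intro v
  refine ⟨Vh.add_mem (hP1Vh v) (hP2Vh _), ?_, ?_⟩
  · intro qh hqh
    have h := hb (v - P1 v) qh hqh
    have : v - (P1 v + P2 (v - P1 v)) = (v - P1 v) - P2 (v - P1 v) := by abel
    rw [this]
    exact h
  · calc ‖P1 v + P2 (v - P1 v)‖ ≤ ‖P1 v‖ + ‖P2 (v - P1 v)‖ := norm_add_le _ _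
      _ ≤ c1 * ‖v‖ + c2 * ‖v‖ := add_le_add (hc1 v) (hc2 v)
      _ = (c1 + c2) * ‖v‖ := by ring
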